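/- Let R be a commutative ring, A an abelian category, and G : Mod(R) → A an additive exact covariant functor such that G(T) is a zero object for every GV-torsion R-module T. Then the following are equivalent: (1) G(A) is nonzero for every nonzero w-module A; (2) G(B) is nonzero for every nonzero GV-torsion-free R-module B; (3) G(R/I) is nonzero for every proper w-ideal I of R; (4) G(R/m) is nonzero for every m ∈ w-Max(R). -/

import Mathlib

universe u v

section WDefs

variable (R : Type u) [CommRing R]

/-- The canonical `R`-linear map `R → Hom_R(J, R)`, `r ↦ (j ↦ r * j)`. -/
def gvCanonicalMap (J : Ideal R) : R →ₗ[R] (J →ₗ[R] R) where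
  toFun r := r • (J.subtype)
  map_add' x y := add_smul x y _
  map_smul' r x := by simp [mul_smul]

/-- A finitely generated ideal `J` of `R` is a GV-ideal (Glaz–Vasconcelos ideal)
if the canonical map `R → Hom_R(J, R)` is an isomorphism. -/
def IsGVIdeal (J : Ideal R) : Prop :=
  J.FG ∧ Function.Bijective (gvCanonicalMap R J)

/-- An ideal `I` of `R` is a w-ideal if whenever `J x ⊆ I` for some GV-ideal `J`,
then `x ∈ I`. -/
def IsWIdeal (I : Ideal R) : Prop :=
  ∀ x : R, (∃ J : Ideal R, IsGVIdeal R J ∧ ∀ j ∈ J, j * x ∈ I) → x ∈ I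

/-- `m` is a maximal w-ideal: maximal among the proper w-ideals of `R`. -/
def IsMaxWIdeal (m : Ideal R) : Prop :=
  IsWIdeal R m ∧ m ≠ ⊤ ∧ ∀ I : Ideal R, IsWIdeal R I → I ≠ ⊤ → m ≤ I → I = m

variable {M : Type v} [AddCommGroup M] [Module R M]

/-- `x` is a GV-torsion element if it is killed by some GV-ideal. -/
def IsGVTorsionElem (x : M) : Prop :=
  ∃ J : Ideal R, IsGVIdeal R J ∧ ∀ j ∈ J, j • x = 0

variable (M)

/-- `M` is GV-torsion-free if it has no nonzero GV-torsion element. -/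
def IsGVTorsionFree : Prop := ∀ x : M, IsGVTorsionElem R x → x = 0

/-- `M` is GV-torsion if all its elements are GV-torsion. -/
def IsGVTorsion : Prop := ∀ x : M, IsGVTorsionElem R x

/-- `M` is a w-module: GV-torsion-free and every map from a GV-ideal to `M`
extends to `R`. -/
def IsWModule : Prop :=
  IsGVTorsionFree R M ∧
    ∀ J : Ideal R, IsGVIdeal R J → ∀ f : J →ₗ[R] M,
      ∃ g : R →ₗ[R] M, ∀ x : J, g (x : R) = f x

end WDefs

open CategoryTheory CategoryTheory.Limits

section GVLemmas
open scoped TensorProduct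

variable {R : Type u} [CommRing R]

lemma gvCanonicalMap_apply (J : Ideal R) (r : R) (x : J) :
    gvCanonicalMap R J r x = r * x := rfl

lemma isGVIdeal_top : IsGVIdeal R (⊤ : Ideal R) := by
  refine ⟨⟨{1}, by simp⟩, ?_, ?_⟩
  · intro a b hab
    have h := congrArg (fun f => f ⟨1, Submodule.mem_top⟩) hab
    simpa [gvCanonicalMap_apply] using h
  · intro f
    refine ⟨f ⟨1, Submodule.mem_top⟩, ?_⟩
    apply LinearMap.ext
    intro x
    have h1 : x = (x : R) • (⟨1, Submodule.mem_top⟩ : (⊤ : Ideal R)) := by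
      apply Subtype.ext; simp
    rw [gvCanonicalMap_apply, h1, map_smul]
    simp [mul_comm]

lemma IsGVIdeal.eq_zero {J : Ideal R} (hJ : IsGVIdeal R J) {r : R}
    (h : ∀ j ∈ J, j * r = 0) : r = 0 := by
  have h0 : gvCanonicalMap R J r = gvCanonicalMap R J 0 := by
    apply LinearMap.ext; intro x
    rw [gvCanonicalMap_apply, gvCanonicalMap_apply, zero_mul, mul_comm]
    exact h x x.2
  exact hJ.2.1 h0

lemma IsGVIdeal.mul_left_cancel {J : Ideal R} (hJ : IsGVIdeal R J) {r r' : R}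
    (h : ∀ j ∈ J, r * j = r' * j) : r = r' := by
  have h0 : r - r' = 0 := hJ.eq_zero fun j hj => by
    rw [mul_sub, mul_comm j r, mul_comm j r', h j hj, sub_self]
  exact sub_eq_zero.mp h0

lemma IsGVIdeal.exists_eq_mul {J : Ideal R} (hJ : IsGVIdeal R J) (f : J →ₗ[R] R) :
    ∃ r : R, ∀ x : J, f x = r * x := by
  obtain ⟨r, hr⟩ := hJ.2.2 f
  exact ⟨r, fun x => by rw [← hr, gvCanonicalMap_apply]⟩

lemma IsGVIdeal.mul {J K : Ideal R} (hJ : IsGVIdeal R J) (hK : IsGVIdeal R K) :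
    IsGVIdeal R (J * K) := by
  have hkill : ∀ r : R, (∀ x ∈ J * K, x * r = 0) → r = 0 := by
    intro r h
    refine hK.eq_zero fun k hk => hJ.eq_zero fun j hj => ?_
    rw [← mul_assoc]
    exact h _ (Ideal.mul_mem_mul hj hk)
  refine ⟨Submodule.FG.mul hJ.1 hK.1, ?_, ?_⟩
  · intro a b hab
    have h : ∀ x ∈ J * K, x * (a - b) = 0 := by
      intro x hx
      have h2 := congrArg (fun f => f (⟨x, hx⟩ : (J * K : Ideal R))) hab
      simp only [gvCanonicalMap_apply] at h2
      rw [mul_sub, mul_comm x a, mul_comm x b, h2, sub_self]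
    exact sub_eq_zero.mp (hkill _ h)
  · intro f
    -- the bilinear map (j, k) ↦ f ⟨j * k⟩
    let b : (↥J) ⊗[R] (↥K) →ₗ[R] R := f.comp (Submodule.mulMap' J K)
    let B : (↥J) →ₗ[R] (↥K) →ₗ[R] R := TensorProduct.curry b
    choose rr hrr using fun k : K => hJ.exists_eq_mul (B.flip k)
    let φ : (↥K) →ₗ[R] R :=
      { toFun := rr
        map_add' := fun a b => hJ.mul_left_cancel fun j hj => by
          have h := congrArg (fun g => g (⟨j, hj⟩ : J)) (map_add B.flip a b)
          simp only [LinearMap.add_apply] at h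
          rw [hrr (a + b) ⟨j, hj⟩, hrr a ⟨j, hj⟩, hrr b ⟨j, hj⟩] at h
          rw [add_mul]
          exact h
        map_smul' := fun c a => hJ.mul_left_cancel fun j hj => by
          have h := congrArg (fun g => g (⟨j, hj⟩ : J)) (map_smul B.flip c a)
          simp only [LinearMap.smul_apply, smul_eq_mul] at h
          rw [hrr (c • a) ⟨j, hj⟩, hrr a ⟨j, hj⟩] at h
          simp only [RingHom.id_apply, smul_eq_mul]
          rw [mul_assoc]
          exact h }
    obtain ⟨s, hs⟩ := hK.exists_eq_mul φ
    refine ⟨s, ?_⟩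
    have key : (gvCanonicalMap R (J * K) s).comp (Submodule.mulMap' J K)
        = f.comp (Submodule.mulMap' J K) := by
      apply TensorProduct.ext'
      intro j k
      rw [LinearMap.comp_apply, LinearMap.comp_apply, gvCanonicalMap_apply]
      have h1 : f (Submodule.mulMap' J K (j ⊗ₜ[R] k)) = B.flip k j := rfl
      have h2 : ((Submodule.mulMap' J K (j ⊗ₜ[R] k)) : R) = (j : R) * k :=
        Submodule.val_mulMap'_tmul j k
      rw [h1, hrr k j, h2]
      have h3 : rr k = φ k := rfl
      rw [h3, hs k]
      ring
    apply LinearMap.ext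
    intro x
    obtain ⟨z, rfl⟩ := Submodule.mulMap'_surjective J K x
    exact congrArg (fun g => g z) key

end GVLemmas
section WenvSec

variable (R : Type u) [CommRing R]

/-- Index type for the direct system: GV-ideals ordered by reverse inclusion. -/
def GVSys : Type u := {J : Ideal R // IsGVIdeal R J}

instance : Preorder (GVSys R) where
  le J K := K.1 ≤ J.1
  le_refl J := le_rfl (α := Ideal R)
  le_trans a b c h h' := fun x hx => h (h' hx)

instance : Nonempty (GVSys R) := ⟨⟨⊤, isGVIdeal_top⟩⟩

noncomputable instance : DecidableEq (GVSys R) := Classical.decEq _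

variable {R} in
/-- Unfold `≤` on `GVSys`. -/
def GVSys.dn {J K : GVSys R} (h : J ≤ K) : K.1 ≤ J.1 := h

variable {R} in
/-- Fold `≤` on `GVSys`. -/
def GVSys.up {J K : GVSys R} (h : K.1 ≤ J.1) : J ≤ K := h

instance : IsDirected (GVSys R) (· ≤ ·) :=
  ⟨fun J K => ⟨⟨J.1 * K.1, J.2.mul K.2⟩, GVSys.up Ideal.mul_le_left, GVSys.up Ideal.mul_le_right⟩⟩

variable (M : Type u) [AddCommGroup M] [Module R M]

/-- Transition maps of the direct system: restriction of linear maps. -/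
noncomputable def gvTr : ∀ (J K : GVSys R), J ≤ K → ((J.1 →ₗ[R] M) →ₗ[R] (K.1 →ₗ[R] M)) :=
  fun _ _ h => LinearMap.lcomp R M (Submodule.inclusion (GVSys.dn h))

instance : DirectedSystem (fun J : GVSys R => J.1 →ₗ[R] M) (fun J K h => gvTr R M J K h) := by
  constructor
  · intro i x; rfl
  · intro k j i hij hjk x; rfl

/-- The w-envelope of `M`: the direct limit of `Hom(J, M)` over GV-ideals `J`. -/
noncomputable def Wenv : Type u :=
  Module.DirectLimit (fun J : GVSys R => J.1 →ₗ[R] M) (gvTr R M)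

noncomputable instance : AddCommGroup (Wenv R M) :=
  inferInstanceAs (AddCommGroup (Module.DirectLimit _ _))

noncomputable instance : Module R (Wenv R M) :=
  inferInstanceAs (Module R (Module.DirectLimit _ _))

/-- Canonical maps into the w-envelope. -/
noncomputable def wof (J : GVSys R) : (J.1 →ₗ[R] M) →ₗ[R] Wenv R M :=
  Module.DirectLimit.of R (GVSys R) (fun J : GVSys R => J.1 →ₗ[R] M) (gvTr R M) J

variable {R M}

lemma wof_eq (J K : GVSys R) (h : J ≤ K) (f : J.1 →ₗ[R] M) :
    wof R M K (f.comp (Submodule.inclusion (GVSys.dn h))) = wof R M J f :=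
  Module.DirectLimit.of_f (G := fun J : GVSys R => J.1 →ₗ[R] M) (f := gvTr R M)
    (hij := h) (x := f)

lemma wof_exists (z : Wenv R M) : ∃ J f, wof R M J f = z :=
  Module.DirectLimit.exists_of z

lemma wof_eq_zero (hM : IsGVTorsionFree R M) {J : GVSys R} {f : J.1 →ₗ[R] M}
    (h : wof R M J f = 0) : f = 0 := by
  obtain ⟨K, hJK, hK0⟩ := Module.DirectLimit.of.zero_exact h
  apply LinearMap.ext; intro x
  refine hM _ ⟨K.1, K.2, fun j hj => ?_⟩
  have hmem : j * (x : R) ∈ K.1 := K.1.mul_mem_right _ hj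
  have h2 : f (Submodule.inclusion (GVSys.dn hJK) ⟨j * (x : R), hmem⟩) = 0 := by
    have := congrArg (fun g => g (⟨j * (x : R), hmem⟩ : K.1)) hK0
    simpa [gvTr] using this
  rw [← map_smul]
  exact h2

lemma wof_injective (hM : IsGVTorsionFree R M) (J : GVSys R) :
    Function.Injective (wof R M J) := by
  intro a b h
  have h0 : a - b = 0 := wof_eq_zero hM (by rw [map_sub, h, sub_self])
  exact sub_eq_zero.mp h0

variable (R M) in
/-- The natural map `M → Hom(R, M)`. -/
def gvTop : M →ₗ[R] ((⊤ : Ideal R) →ₗ[R] M) where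
  toFun m :=
    { toFun := fun x => (x : R) • m
      map_add' := fun a b => by simp [add_smul]
      map_smul' := fun c a => by simp [mul_smul] }
  map_add' m m' := by apply LinearMap.ext; intro x; simp [smul_add]
  map_smul' c m := by apply LinearMap.ext; intro x; exact smul_comm _ _ _

variable (R M) in
/-- The canonical embedding of `M` into its w-envelope. -/
noncomputable def wofM : M →ₗ[R] Wenv R M :=
  (wof R M ⟨⊤, isGVIdeal_top⟩).comp (gvTop R M)

lemma wofM_injective (hM : IsGVTorsionFree R M) : Function.Injective (wofM R M) := by
  intro a b h
  have h2 : gvTop R M a = gvTop R M b := wof_injective hM _ h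
  have h3 := congrArg (fun g => g (⟨1, Submodule.mem_top⟩ : (⊤ : Ideal R))) h2
  simpa [gvTop] using h3

lemma smul_wof (J : GVSys R) (f : J.1 →ₗ[R] M) (j : J.1) :
    (j : R) • wof R M J f = wofM R M (f j) := by
  have h1 : ((j : R) • f) = (gvTop R M (f j)).comp
      (Submodule.inclusion (le_top : J.1 ≤ (⊤ : Ideal R))) := by
    apply LinearMap.ext; intro x
    calc ((j : R) • f) x = (j : R) • f x := rfl
      _ = f ((j : R) • x) := (map_smul f _ x).symm
      _ = f ((x : R) • j) := by
          congr 1; apply Subtype.ext; simp [mul_comm]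
      _ = (x : R) • f j := map_smul f _ j
  rw [← map_smul, h1]
  exact wof_eq ⟨⊤, isGVIdeal_top⟩ J (GVSys.up le_top) (gvTop R M (f j))

lemma wenv_torsionFree (hM : IsGVTorsionFree R M) : IsGVTorsionFree R (Wenv R M) := by
  rintro z ⟨K, hK, hz⟩
  obtain ⟨J, f, rfl⟩ := wof_exists z
  suffices h : f = 0 by rw [h, map_zero]
  apply LinearMap.ext; intro x
  refine hM _ ⟨K, hK, fun k hk => ?_⟩
  have h1 : wof R M J ((k : R) • f) = 0 := by rw [map_smul]; exact hz k hk
  have h2 := wof_eq_zero hM h1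
  have := congrArg (fun g => g x) h2
  simpa using this

lemma wenv_quot_torsion :
    IsGVTorsion R ((Wenv R M) ⧸ LinearMap.range (wofM R M)) := by
  intro z
  obtain ⟨w, rfl⟩ := Submodule.Quotient.mk_surjective _ z
  obtain ⟨J, f, rfl⟩ := wof_exists w
  refine ⟨J.1, J.2, fun j hj => ?_⟩
  rw [← Submodule.Quotient.mk_smul, Submodule.Quotient.mk_eq_zero]
  exact ⟨f ⟨j, hj⟩, (smul_wof J f ⟨j, hj⟩).symm⟩

lemma wenv_nontrivial (hM : IsGVTorsionFree R M) [Nontrivial M] :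
    Nontrivial (Wenv R M) := by
  obtain ⟨b, hb⟩ := exists_ne (0 : M)
  exact ⟨wofM R M b, 0, fun hc => hb (wofM_injective hM (by rw [hc, map_zero]))⟩

end WenvSec
section WModuleSec

open scoped TensorProduct

variable {R : Type u} [CommRing R] {M : Type u} [AddCommGroup M] [Module R M]

lemma wenv_ext (hM : IsGVTorsionFree R M) {K : Ideal R} (hK : IsGVIdeal R K)
    (g : ↥K →ₗ[R] Wenv R M) :
    ∃ g' : R →ₗ[R] Wenv R M, ∀ x : ↥K, g' (x : R) = g x := by
  classical
  obtain ⟨T, hT⟩ := hK.1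
  have hstage : ∀ t : {t // t ∈ T}, ∃ (J : GVSys R) (f : J.1 →ₗ[R] M),
      wof R M J f = g ⟨t.1, hT ▸ Ideal.subset_span t.2⟩ := fun t => wof_exists _
  choose Jt ft hft using hstage
  have prodgv : IsGVIdeal R (∏ t ∈ T.attach, (Jt t).1) := by
    refine Finset.prod_induction _ (IsGVIdeal R) (fun a b ha hb => ha.mul hb) ?_
      (fun t _ => (Jt t).2)
    rw [Ideal.one_eq_top]; exact isGVIdeal_top
  set J₁ : GVSys R := ⟨∏ t ∈ T.attach, (Jt t).1, prodgv⟩ with hJ₁def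
  have hle : ∀ t, (Jt t) ≤ J₁ := by
    intro t
    refine GVSys.up ?_
    calc J₁.1 = (Jt t).1 * ∏ s ∈ T.attach.erase t, (Jt s).1 :=
        (Finset.mul_prod_erase _ _ (Finset.mem_attach T t)).symm
      _ ≤ (Jt t).1 := Ideal.mul_le_left
  have hrange : ∀ k : ↥K, g k ∈ LinearMap.range (wof R M J₁) := by
    intro k
    have hk : (k : R) ∈ Ideal.span (T : Set R) := by rw [hT]; exact k.2
    have main : ∀ x (hx : x ∈ Ideal.span (T : Set R)),
        g ⟨x, hT ▸ hx⟩ ∈ LinearMap.range (wof R M J₁) := by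
      intro x hx
      induction hx using Submodule.span_induction with
      | mem a ha =>
          refine ⟨(ft ⟨a, ha⟩).comp (Submodule.inclusion (GVSys.dn (hle ⟨a, ha⟩))), ?_⟩
          exact (wof_eq _ _ (hle ⟨a, ha⟩) _).trans (hft ⟨a, ha⟩)
      | zero =>
          show g 0 ∈ LinearMap.range (wof R M J₁)
          rw [map_zero]; exact Submodule.zero_mem _
      | add u v hu hv ihu ihv =>
          show g (⟨u, hT ▸ hu⟩ + ⟨v, hT ▸ hv⟩) ∈ LinearMap.range (wof R M J₁)
          rw [map_add]; exact Submodule.add_mem _ ihu ihv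
      | smul c u hu ihu =>
          show g (c • ⟨u, hT ▸ hu⟩) ∈ LinearMap.range (wof R M J₁)
          rw [map_smul]; exact Submodule.smul_mem _ _ ihu
    exact main k.1 hk
  choose Φ0 hΦ0 using hrange
  obtain ⟨Φ, hΦval⟩ : ∃ Φ : ↥K →ₗ[R] (J₁.1 →ₗ[R] M), ∀ k, Φ k = Φ0 k := by
    refine ⟨{ toFun := Φ0, map_add' := ?_, map_smul' := ?_ }, fun _ => rfl⟩
    · intro a b
      apply wof_injective hM J₁
      rw [hΦ0, map_add (wof R M J₁), hΦ0, hΦ0]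
      exact map_add g a b
    · intro c a
      simp only [RingHom.id_apply]
      apply wof_injective hM J₁
      rw [hΦ0, map_smul (wof R M J₁), hΦ0]
      exact map_smul g c a
  have hwΦ : ∀ k : ↥K, wof R M J₁ (Φ k) = g k := by
    intro k; rw [hΦval]; exact hΦ0 k
  have hcomm : ∀ (k k' : ↥K) (x : ↥J₁.1), (k : R) • Φ k' x = (k' : R) • Φ k x := by
    intro k k' x
    have hsm : ((k : R) • k' : ↥K) = (k' : R) • k := by
      apply Subtype.ext; simp [mul_comm]
    have h1 : wof R M J₁ ((k : R) • Φ k') = wof R M J₁ ((k' : R) • Φ k) := by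
      rw [map_smul, map_smul, hwΦ, hwΦ, ← map_smul g, ← map_smul g, hsm]
    have h2 := congrArg (fun f => f x) (wof_injective hM J₁ h1)
    simpa using h2
  have hμsurj : Function.Surjective (Submodule.mulMap' K J₁.1) :=
    Submodule.mulMap'_surjective K J₁.1
  have hσtmul : ∀ (a : ↥K) (b : ↥J₁.1),
      Submodule.inclusion (Ideal.mul_le_right : K * J₁.1 ≤ J₁.1)
        (Submodule.mulMap' K J₁.1 (a ⊗ₜ[R] b)) = (a : R) • b := by
    intro a b
    apply Subtype.ext
    simpa using Submodule.val_mulMap'_tmul a b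
  have hcross : ∀ (k : ↥K) (z : (↥K) ⊗[R] (↥J₁.1)),
      (k : R) • TensorProduct.lift Φ z
        = Φ k (Submodule.inclusion (Ideal.mul_le_right : K * J₁.1 ≤ J₁.1)
            (Submodule.mulMap' K J₁.1 z)) := by
    intro k z
    have hmaps : ((k : R) • TensorProduct.lift Φ)
        = (Φ k).comp ((Submodule.inclusion (Ideal.mul_le_right : K * J₁.1 ≤ J₁.1)).comp
            (Submodule.mulMap' K J₁.1)) := by
      apply TensorProduct.ext'
      intro a b
      simp only [LinearMap.smul_apply, LinearMap.comp_apply, TensorProduct.lift.tmul]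
      rw [hσtmul a b, map_smul]
      exact hcomm k a b
    have := congrArg (fun f => f z) hmaps
    simpa using this
  have hker : LinearMap.ker (Submodule.mulMap' K J₁.1)
      ≤ LinearMap.ker (TensorProduct.lift Φ) := by
    intro z hz
    rw [LinearMap.mem_ker] at hz ⊢
    refine hM _ ⟨K, hK, fun k hk => ?_⟩
    have h5 : k • TensorProduct.lift Φ z
        = Φ ⟨k, hk⟩ (Submodule.inclusion (Ideal.mul_le_right : K * J₁.1 ≤ J₁.1)
            (Submodule.mulMap' K J₁.1 z)) := hcross ⟨k, hk⟩ z
    rw [h5, hz, map_zero, map_zero]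
  obtain ⟨F, hF⟩ : ∃ F : ↥(K * J₁.1) →ₗ[R] M,
      ∀ z, F (Submodule.mulMap' K J₁.1 z) = TensorProduct.lift Φ z := by
    refine ⟨(Submodule.liftQ (LinearMap.ker (Submodule.mulMap' K J₁.1))
        (TensorProduct.lift Φ) hker).comp
      (LinearMap.quotKerEquivOfSurjective (Submodule.mulMap' K J₁.1) hμsurj).symm.toLinearMap,
      fun z => ?_⟩
    have h1 : (LinearMap.quotKerEquivOfSurjective (Submodule.mulMap' K J₁.1) hμsurj).symm
        (Submodule.mulMap' K J₁.1 z) = Submodule.Quotient.mk z := by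
      rw [LinearEquiv.symm_apply_eq]
      rfl
    rw [LinearMap.comp_apply, LinearEquiv.coe_toLinearMap, h1, Submodule.liftQ_apply]
  set J₂ : GVSys R := ⟨K * J₁.1, hK.mul J₁.2⟩ with hJ₂def
  have hky : ∀ k : ↥K, (k : R) • wof R M J₂ F = g k := by
    intro k
    have h1 : (k : R) • F = (Φ k).comp
        (Submodule.inclusion (GVSys.dn (GVSys.up Ideal.mul_le_right : J₁ ≤ J₂))) := by
      apply LinearMap.ext
      intro w
      obtain ⟨z, rfl⟩ := hμsurj w
      simp only [LinearMap.smul_apply, LinearMap.comp_apply]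
      rw [hF z]
      exact hcross k z
    rw [← map_smul, h1, wof_eq J₁ J₂ (GVSys.up Ideal.mul_le_right) (Φ k)]
    exact hwΦ k
  refine ⟨LinearMap.toSpanSingleton R _ (wof R M J₂ F), fun x => ?_⟩
  rw [LinearMap.toSpanSingleton_apply]
  exact hky x

end WModuleSec
open CategoryTheory CategoryTheory.Limits

section CatLemmas

variable {R : Type u} [CommRing R] {A : Type v} [Category.{w} A] [Abelian A]
variable (G : ModuleCat.{u} R ⥤ A) [G.Additive]
variable [PreservesFiniteLimits G] [PreservesFiniteColimits G]

lemma isZero_src {X Y : ModuleCat.{u} R} (f : X ⟶ Y) (hf : Function.Injective f)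
    (hY : IsZero (G.obj Y)) : IsZero (G.obj X) := by
  have : Mono f := (ModuleCat.mono_iff_injective f).2 hf
  have : Mono (G.map f) := G.map_mono f
  exact IsZero.of_mono (G.map f) hY

lemma isZero_tgt {X Y : ModuleCat.{u} R} (f : X ⟶ Y) (hf : Function.Surjective f)
    (hX : IsZero (G.obj X)) : IsZero (G.obj Y) := by
  have : Epi f := (ModuleCat.epi_iff_surjective f).2 hf
  have : Epi (G.map f) := G.map_epi f
  exact IsZero.of_epi (G.map f) hX

lemma isZero_mid (S : ShortComplex (ModuleCat.{u} R)) (hS : S.Exact)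
    (h1 : IsZero (G.obj S.X₁)) (h3 : IsZero (G.obj S.X₃)) : IsZero (G.obj S.X₂) := by
  have hm := hS.map G
  exact hm.isZero_of_both_zeros (h1.eq_of_src _ _) (h3.eq_of_tgt _ _)

end CatLemmas


/-- w-version of Ishikawa's Theorem 1.1: for an additive exact covariant
functor `G : Mod(R) → 𝒜` annihilating GV-torsion modules, TFAE:
(1) `G(A) ≠ 0` for every nonzero w-module `A`;
(2) `G(B) ≠ 0` for every nonzero GV-torsion-free module `B`;
(3) `G(R/I) ≠ 0` for every proper w-ideal `I`;
(4) `G(R/m) ≠ 0` for every maximal w-ideal `m`. -/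
theorem wFaithfullyExact_tfae {R : Type u} [CommRing R] {A : Type v} [Category.{w} A]
    [Abelian A] (G : ModuleCat.{u} R ⥤ A) [G.Additive]
    [PreservesFiniteLimits G] [PreservesFiniteColimits G]
    (hGV : ∀ T : ModuleCat.{u} R, IsGVTorsion R T → IsZero (G.obj T)) :
    List.TFAE [
      ∀ N : ModuleCat.{u} R, IsWModule R N → Nontrivial N → ¬ IsZero (G.obj N),
      ∀ B : ModuleCat.{u} R, IsGVTorsionFree R B → Nontrivial B → ¬ IsZero (G.obj B),
      ∀ I : Ideal R, IsWIdeal R I → I ≠ ⊤ → ¬ IsZero (G.obj (ModuleCat.of R (R ⧸ I))),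
      ∀ m : Ideal R, IsMaxWIdeal R m → ¬ IsZero (G.obj (ModuleCat.of R (R ⧸ m))) ] := by
  tfae_have 2 → 1 := by
    intro h2 N hN hNt
    exact h2 N hN.1 hNt
  tfae_have 1 → 2 := by
    intro h1 B hB hBt h0
    haveI : Nontrivial ↥B := hBt
    have hWt : Nontrivial (Wenv R ↥B) := wenv_nontrivial hB
    have hW : IsWModule R (Wenv R ↥B) :=
      ⟨wenv_torsionFree hB, fun J hJ f => wenv_ext hB hJ f⟩
    have hQ : IsZero (G.obj (ModuleCat.of R
        ((Wenv R ↥B) ⧸ LinearMap.range (wofM R ↥B)))) :=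
      hGV _ (wenv_quot_torsion)
    let S : ShortComplex (ModuleCat.{u} R) :=
      ShortComplex.mk
        (ModuleCat.ofHom (wofM R ↥B) :
          B ⟶ ModuleCat.of R (Wenv R ↥B))
        (ModuleCat.ofHom (LinearMap.range (wofM R ↥B)).mkQ)
        (by
          ext m
          exact (Submodule.Quotient.mk_eq_zero _).2 ⟨m, rfl⟩)
    have hSex : S.Exact := by
      rw [ShortComplex.moduleCat_exact_iff]
      intro x hx
      exact (Submodule.Quotient.mk_eq_zero _).1 hx
    have hWz : IsZero (G.obj (ModuleCat.of R (Wenv R ↥B))) :=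
      isZero_mid G S hSex h0 hQ
    exact h1 (ModuleCat.of R (Wenv R ↥B)) hW hWt hWz
  tfae_have 2 → 3 := by
    intro h2 I hI hItop
    refine h2 (ModuleCat.of R (R ⧸ I)) ?_ ?_
    · rintro x ⟨J, hJ, hx⟩
      obtain ⟨r, rfl⟩ := Submodule.Quotient.mk_surjective I x
      rw [Submodule.Quotient.mk_eq_zero]
      refine hI r ⟨J, hJ, fun j hj => ?_⟩
      have h := hx j hj
      rwa [← Submodule.Quotient.mk_smul, Submodule.Quotient.mk_eq_zero] at h
    · exact Ideal.Quotient.nontrivial_iff.mpr hItop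
  tfae_have 3 → 4 := by
    intro h3 m hm
    exact h3 m hm.1 hm.2.1
  tfae_have 4 → 2 := by
    intro h4 B hB hBt h0
    haveI : Nontrivial ↥B := hBt
    obtain ⟨x, hx⟩ := exists_ne (0 : ↥B)
    set I : Ideal R := LinearMap.ker (LinearMap.toSpanSingleton R ↥B x) with hIdef
    have hIw : IsWIdeal R I := by
      rintro r ⟨J, hJ, hr⟩
      have htors : IsGVTorsionElem R (r • x) := by
        refine ⟨J, hJ, fun j hj => ?_⟩
        have h1 := hr j hj
        rw [hIdef, LinearMap.mem_ker, LinearMap.toSpanSingleton_apply] at h1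
        rw [smul_smul]
        exact h1
      have h2 := hB _ htors
      rw [hIdef, LinearMap.mem_ker, LinearMap.toSpanSingleton_apply]
      exact h2
    have hItop : I ≠ ⊤ := by
      intro h
      apply hx
      have h1 : (1 : R) ∈ I := h ▸ Submodule.mem_top
      rw [hIdef, LinearMap.mem_ker, LinearMap.toSpanSingleton_apply, one_smul] at h1
      exact h1
    set Sw : Set (Ideal R) := {J | IsWIdeal R J ∧ J ≠ ⊤} with hSwdef
    have hchain : ∀ c ⊆ Sw, IsChain (· ≤ ·) c → ∀ y ∈ c, ∃ ub ∈ Sw, ∀ z ∈ c, z ≤ ub := by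
      intro c hcS hc y hy
      have hdir : DirectedOn (· ≤ ·) c := hc.directedOn
      have hne : c.Nonempty := ⟨y, hy⟩
      have hmem : ∀ z : R, z ∈ sSup c ↔ ∃ s ∈ c, z ∈ s := fun z =>
        Submodule.mem_sSup_of_directed hne hdir
      refine ⟨sSup c, ⟨?_, ?_⟩, fun z hz => le_sSup hz⟩
      · rintro r ⟨J, hJ, hr⟩
        obtain ⟨T, hT⟩ := hJ.1
        have hcom : ∀ U : Finset R, (∀ t ∈ U, t * r ∈ sSup c) →
            ∃ s ∈ c, ∀ t ∈ U, t * r ∈ s := by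
          intro U
          classical
          induction U using Finset.induction_on with
          | empty => exact fun _ => ⟨y, hy, by simp⟩
          | insert _ _ ha ih =>
            rename_i a U'
            intro hU
            obtain ⟨s₁, hs₁c, hs₁⟩ := ih fun t ht => hU t (Finset.mem_insert_of_mem ht)
            obtain ⟨s₂, hs₂c, hs₂⟩ := (hmem (a * r)).1 (hU a (Finset.mem_insert_self a U'))
            obtain ⟨s₃, hs₃c, h₁₃, h₂₃⟩ := hdir s₁ hs₁c s₂ hs₂c
            refine ⟨s₃, hs₃c, fun t ht => ?_⟩
            rcases Finset.mem_insert.1 ht with rfl | ht'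
            · exact h₂₃ hs₂
            · exact h₁₃ (hs₁ t ht')
        obtain ⟨s, hsc, hs⟩ := hcom T fun t ht => hr t (hT ▸ Ideal.subset_span ht)
        have hJs : ∀ j ∈ J, j * r ∈ s := by
          intro j hj
          rw [← hT] at hj
          induction hj using Submodule.span_induction with
          | mem t ht => exact hs t ht
          | zero => rw [zero_mul]; exact s.zero_mem
          | add u v hu hv ihu ihv => rw [add_mul]; exact s.add_mem ihu ihv
          | smul a u hu ihu =>
              rw [smul_eq_mul, mul_assoc]
              exact Ideal.mul_mem_left s a ihu
        have hrs : r ∈ s := (hcS hsc).1 r ⟨J, hJ, hJs⟩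
        exact le_sSup hsc hrs
      · intro htop
        have h1 : (1 : R) ∈ sSup c := htop ▸ Submodule.mem_top
        obtain ⟨s, hsc, hs1⟩ := (hmem 1).1 h1
        exact (hcS hsc).2 ((Ideal.eq_top_iff_one s).2 hs1)
    obtain ⟨m, hIm, hmax⟩ := zorn_le_nonempty₀ Sw hchain I ⟨hIw, hItop⟩
    have hmMax : IsMaxWIdeal R m :=
      ⟨hmax.1.1, hmax.1.2, fun I' hw ht hle => le_antisymm (hmax.2 ⟨hw, ht⟩ hle) hle⟩
    have hq1 : Function.Injective (Submodule.liftQ I (LinearMap.toSpanSingleton R ↥B x) le_rfl) := by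
      rw [← LinearMap.ker_eq_bot]
      exact Submodule.ker_liftQ_eq_bot I _ le_rfl le_rfl
    have hz1 : IsZero (G.obj (ModuleCat.of R (R ⧸ I))) :=
      isZero_src G (ModuleCat.ofHom
        (Submodule.liftQ I (LinearMap.toSpanSingleton R ↥B x) le_rfl) :
          ModuleCat.of R (R ⧸ I) ⟶ B) hq1 h0
    have hImle : I ≤ Submodule.comap (LinearMap.id : R →ₗ[R] R) m := fun z hz => hIm hz
    have hsur : Function.Surjective (Submodule.mapQ I m LinearMap.id hImle) := by
      intro z
      obtain ⟨r, rfl⟩ := Submodule.Quotient.mk_surjective m z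
      exact ⟨Submodule.Quotient.mk r, by rw [Submodule.mapQ_apply]; rfl⟩
    have hz2 : IsZero (G.obj (ModuleCat.of R (R ⧸ m))) :=
      isZero_tgt G (ModuleCat.ofHom (Submodule.mapQ I m LinearMap.id hImle) :
        ModuleCat.of R (R ⧸ I) ⟶ ModuleCat.of R (R ⧸ m)) hsur hz1
    exact h4 m hmMax hz2
  tfae_finish
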